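/- arXiv:1502.01998 — 3 statements merged into one kernel-verified Lean document; each statement's English description precedes it below -/
import Mathlib

section
/- Let K be a number field, let ℓ be a prime number, let k be a natural number, and let S be a finite set of finite places of K. For every family (x_v)_{v ∈ S} with x_v ∈ K_vˣ there exists α ∈ Kˣ such that for every v ∈ S the element ι_v(α) · x_v⁻¹ is an ℓ^k-th power in K_vˣ. Equivalently, the diagonal map Kˣ → ∏_{v ∈ S} K_vˣ/(K_vˣ)^{ℓ^k} is surjective. -/
open IsDedekindDomain IsDedekindDomain.HeightOneSpectrum NumberField
open scoped NumberField

set_option maxHeartbeats 1000000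

open Finset in
lemma exists_taylor_pow {F : Type*} [NormedField F] [IsUltrametricDist F]
    (n : ℕ) (hn : 1 ≤ n) (y h : F) :
    ∃ E : F, (y + h) ^ n = y ^ n + (n : F) * y ^ (n - 1) * h + h ^ 2 * E ∧
      (‖y‖ ≤ 1 → ‖h‖ ≤ 1 → ‖E‖ ≤ 1) := by
  refine ⟨∑ i ∈ Finset.range (n - 1), y ^ i * h ^ (n - i - 2) * (n.choose i : F), ?_, ?_⟩
  · obtain ⟨m, rfl⟩ : ∃ m, n = m + 1 := ⟨n - 1, (Nat.succ_pred_eq_of_pos hn).symm⟩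
    rw [add_pow, Finset.sum_range_succ, Finset.sum_range_succ]
    have hsum : ∑ i ∈ Finset.range m, y ^ i * h ^ (m + 1 - i) * ((m+1).choose i : F)
        = h ^ 2 * ∑ i ∈ Finset.range (m + 1 - 1), y ^ i * h ^ (m + 1 - i - 2) * ((m+1).choose i : F) := by
      rw [Finset.mul_sum]
      simp only [Nat.add_sub_cancel]
      refine Finset.sum_congr rfl fun i hi => ?_
      rw [Finset.mem_range] at hi
      rw [show h ^ (m + 1 - i) = h ^ 2 * h ^ (m + 1 - i - 2) by
        rw [← pow_add]; congr 1; omega]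
      ring
    rw [hsum]
    simp [Nat.choose_succ_self_right]
    ring
  · intro hy hh
    apply IsUltrametricDist.norm_sum_le_of_forall_le_of_nonneg zero_le_one
    intro i _
    rw [norm_mul, norm_mul, norm_pow, norm_pow]
    have h0 := IsUltrametricDist.norm_natCast_le_one F (n.choose i)
    have h1 : ‖y‖ ^ i ≤ 1 := pow_le_one₀ (norm_nonneg _) hy
    have h2 : ‖h‖ ^ (n - i - 2) ≤ 1 := pow_le_one₀ (norm_nonneg _) hh
    calc ‖y‖ ^ i * ‖h‖ ^ (n - i - 2) * ‖(n.choose i : F)‖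
        ≤ 1 * 1 * 1 := by gcongr <;> positivity
      _ = 1 := by ring

open Filter Topology in
lemma exists_pow_eq_of_norm_sub_one_lt {F : Type*} [NormedField F] [IsUltrametricDist F]
    [CompleteSpace F] {n : ℕ} {u : F} (hn : (n : F) ≠ 0)
    (hu : ‖u - 1‖ < ‖(n : F)‖ ^ 2) : ∃ y : F, y ^ n = u ∧ ‖y - 1‖ < 1 := by
  have hn1 : 1 ≤ n := by
    rcases Nat.eq_zero_or_pos n with h | h
    · exact absurd (by simp [h]) hn
    · exact h
  set N : ℝ := ‖(n : F)‖ with hNdef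
  have hN0 : 0 < N := norm_pos_iff.mpr hn
  have hN1 : N ≤ 1 := IsUltrametricDist.norm_natCast_le_one F n
  set ε₀ : ℝ := ‖u - 1‖ with hε₀def
  have hε₀0 : 0 ≤ ε₀ := norm_nonneg _
  set t : ℝ := ε₀ / N ^ 2 with htdef
  have ht0 : 0 ≤ t := div_nonneg hε₀0 (by positivity)
  have ht1 : t < 1 := (div_lt_one (by positivity)).2 hu
  have hεN : ε₀ / N < N := by
    rw [div_lt_iff₀ hN0, ← sq]
    exact hu
  have hεN1 : ε₀ / N < 1 := lt_of_lt_of_le hεN hN1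
  set g : F → F := fun y => y - (y ^ n - u) / ((n : F) * y ^ (n - 1)) with hgdef
  set s : ℕ → F := fun m => g^[m] 1 with hsdef
  -- main invariant and step estimate
  have step : ∀ m : ℕ, (‖s m - 1‖ ≤ ε₀ / N ∧ ‖s m ^ n - u‖ ≤ ε₀ * t ^ m) →
      (‖s (m+1) - 1‖ ≤ ε₀ / N ∧ ‖s (m+1) ^ n - u‖ ≤ ε₀ * t ^ (m+1)) ∧
        ‖s (m+1) - s m‖ ≤ (ε₀ / N) * t ^ m := by
    intro m ⟨ih1, ih2⟩
    set y : F := s m with hydef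
    have htm1 : t ^ m ≤ 1 := pow_le_one₀ ht0 ht1.le
    have hεm0 : 0 ≤ ‖y ^ n - u‖ := norm_nonneg _
    have hεm : ‖y ^ n - u‖ ≤ ε₀ := ih2.trans (by nlinarith)
    have hy1 : ‖y - 1‖ < 1 := lt_of_le_of_lt ih1 hεN1
    have hynorm : ‖y‖ = 1 := by
      have hy : y = (y - 1) + 1 := by ring
      rw [hy, IsUltrametricDist.norm_add_eq_max_of_norm_ne_norm (by
        rw [norm_one]; exact hy1.ne), norm_one, max_eq_right hy1.le]
    have hyn1 : ‖y ^ (n - 1)‖ = 1 := by rw [norm_pow, hynorm, one_pow]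
    set D : F := (n : F) * y ^ (n - 1) with hDdef
    have hDnorm : ‖D‖ = N := by rw [hDdef, norm_mul, hyn1, mul_one]
    have hDne : D ≠ 0 := by
      intro h0
      rw [h0, norm_zero] at hDnorm
      exact hN0.ne hDnorm
    set h : F := -((y ^ n - u) / D) with hhdef
    have hs1 : s (m + 1) = y + h := by
      rw [hsdef]
      simp only [Function.iterate_succ_apply']
      rw [hgdef]
      simp only [← hsdef, ← hydef, ← hDdef, hhdef]
      ring
    have hhnorm : ‖h‖ = ‖y ^ n - u‖ / N := by rw [hhdef, norm_neg, norm_div, hDnorm]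
    have hhle : ‖h‖ ≤ ε₀ / N := by
      rw [hhnorm]
      gcongr
    have hh1 : ‖h‖ ≤ 1 := hhle.trans hεN1.le
    obtain ⟨E, hE, hEb⟩ := exists_taylor_pow n hn1 y h
    have hEb1 : ‖E‖ ≤ 1 := hEb hynorm.le hh1
    have hDh : D * h = -(y ^ n - u) := by
      rw [hhdef, mul_neg, mul_div_cancel₀ _ hDne]
    have hkey : s (m + 1) ^ n - u = h ^ 2 * E := by
      rw [hs1, hE, ← hDdef, hDh]; ring
    refine ⟨⟨?_, ?_⟩, ?_⟩
    · rw [hs1, show y + h - 1 = (y - 1) + h by ring]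
      exact (IsUltrametricDist.norm_add_le_max _ _).trans (max_le ih1 hhle)
    · rw [hkey, norm_mul, norm_pow]
      have hb1 : ‖h‖ ^ 2 * ‖E‖ ≤ ‖h‖ ^ 2 := by
        nlinarith [norm_nonneg E, norm_nonneg h, sq_nonneg ‖h‖]
      have hb2 : ‖h‖ ≤ ε₀ * t ^ m / N := by
        rw [hhnorm]; gcongr
      have hb3 : ‖h‖ ^ 2 ≤ (ε₀ * t ^ m / N) ^ 2 := by
        gcongr
      have hε₀eq : ε₀ = t * N ^ 2 := by
        rw [htdef, div_mul_cancel₀]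
        positivity
      have hb4 : (ε₀ * t ^ m / N) ^ 2 ≤ ε₀ * t ^ (m + 1) := by
        have h1 : (ε₀ * t ^ m / N) ^ 2 = (t ^ m) ^ 2 * t ^ 2 * N ^ 2 := by
          rw [hε₀eq]; field_simp
        have h2 : ε₀ * t ^ (m + 1) = t ^ m * t ^ 2 * N ^ 2 := by
          rw [hε₀eq, pow_succ]; ring
        have htt : (t ^ m) ^ 2 ≤ t ^ m := by
          nlinarith [mul_le_mul_of_nonneg_left htm1 (pow_nonneg ht0 m)]
        rw [h1, h2]
        exact mul_le_mul_of_nonneg_right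
          (mul_le_mul_of_nonneg_right htt (sq_nonneg t)) (sq_nonneg N)
      linarith
    · rw [hs1, show y + h - y = h by ring]
      calc ‖h‖ = ‖y ^ n - u‖ / N := hhnorm
        _ ≤ ε₀ * t ^ m / N := by gcongr
        _ = (ε₀ / N) * t ^ m := by ring
  have key : ∀ m, ‖s m - 1‖ ≤ ε₀ / N ∧ ‖s m ^ n - u‖ ≤ ε₀ * t ^ m := by
    intro m
    induction m with
    | zero =>
      constructor
      · simp only [hsdef, Function.iterate_zero, id_eq, sub_self, norm_zero]
        positivity
      · simp only [hsdef, Function.iterate_zero, id_eq, one_pow, pow_zero, mul_one]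
        rw [show (1 : F) - u = -(u - 1) by ring, norm_neg]
    | succ m ih => exact (step m ih).1
  have hcauchy : CauchySeq s := by
    apply cauchySeq_of_le_geometric t (ε₀ / N) ht1
    intro m
    rw [dist_comm, dist_eq_norm]
    exact (step m (key m)).2
  obtain ⟨y, hy⟩ := cauchySeq_tendsto_of_complete hcauchy
  refine ⟨y, ?_, ?_⟩
  · have h1 : Tendsto (fun m => s m ^ n - u) atTop (𝓝 (y ^ n - u)) :=
      (hy.pow n).sub tendsto_const_nhds
    have h2 : Tendsto (fun m => s m ^ n - u) atTop (𝓝 0) := by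
      apply squeeze_zero_norm (fun m => (key m).2)
      have := (tendsto_pow_atTop_nhds_zero_of_lt_one ht0 ht1).const_mul ε₀
      simpa using this
    exact sub_eq_zero.mp (tendsto_nhds_unique h1 h2)
  · have h3 : Tendsto (fun m => ‖s m - 1‖) atTop (𝓝 ‖y - 1‖) :=
      (hy.sub tendsto_const_nhds).norm
    have h4 : ‖y - 1‖ ≤ ε₀ / N := le_of_tendsto h3 (Filter.Eventually.of_forall fun m => (key m).1)
    exact lt_of_le_of_lt h4 hεN1

open IsDedekindDomain IsDedekindDomain.HeightOneSpectrum NumberField Multiplicative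
open scoped NumberField NNReal

section helpers
variable (K : Type*) [Field K] [NumberField K] (v : HeightOneSpectrum (𝓞 K))

open scoped Valued in
lemma adicCompletion_norm_le_of_valued_le (x : v.adicCompletion K) (M : ℕ)
    (h : Valued.v x ≤ (ofAdd (-(M : ℤ)) : Multiplicative ℤ)) :
    ‖x‖ ≤ ((1 : ℝ) / 2) ^ M := by
  have he := NumberField.HeightOneSpectrum.one_lt_absNorm_nnreal v
  have hmono := (WithZeroMulInt.toNNReal_strictMono he).monotone h
  have h2 : (2 : ℝ) ≤ (Ideal.absNorm v.asIdeal : ℝ) := by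
    have := NumberField.HeightOneSpectrum.one_lt_absNorm v
    exact_mod_cast this
  calc ‖x‖ = ((WithZeroMulInt.toNNReal (NumberField.HeightOneSpectrum.absNorm_ne_zero v) (Valued.v x) : ℝ≥0) : ℝ) :=
        NumberField.FinitePlace.norm_def v x
    _ ≤ ((WithZeroMulInt.toNNReal (NumberField.HeightOneSpectrum.absNorm_ne_zero v)
          ((ofAdd (-(M : ℤ)) : Multiplicative ℤ) : WithZero (Multiplicative ℤ)) : ℝ≥0) : ℝ) := by
        exact_mod_cast hmono
    _ = ((Ideal.absNorm v.asIdeal : ℝ) ^ M)⁻¹ := by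
        rw [WithZeroMulInt.toNNReal_neg_apply _ WithZero.coe_ne_zero, WithZero.unzero_coe,
          toAdd_ofAdd, zpow_neg, zpow_natCast]
        push_cast
        rfl
    _ ≤ ((2 : ℝ) ^ M)⁻¹ := inv_anti₀ (by positivity) (pow_le_pow_left₀ (by norm_num) h2 M)
    _ = ((1 : ℝ) / 2) ^ M := by rw [one_div, inv_pow]
end helpers

open Filter Topology
open scoped Valued


/-- **ℓ-adic approximation theorem (finite level).**
For a number field `K`, a prime `ℓ`, `k : ℕ` and a finite set `S` of finite places of `K`
(i.e. maximal ideals of `𝓞 K`), every family `(x_v)_{v ∈ S}` of units of the completions `K_v`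
can be approximated by a single global element `α ∈ Kˣ`, in the sense that for each `v ∈ S`
the element `ι_v(α) * x_v⁻¹` is an `ℓ^k`-th power in `K_vˣ`. -/
theorem ladic_approximation
    (K : Type*) [Field K] [NumberField K]
    (ℓ : ℕ) (hℓ : ℓ.Prime) (k : ℕ)
    (S : Finset (HeightOneSpectrum (𝓞 K)))
    (x : ∀ v : HeightOneSpectrum (𝓞 K), (v.adicCompletion K)ˣ) :
    ∃ α : Kˣ, ∀ v ∈ S, ∃ y : (v.adicCompletion K)ˣ,
      Units.map (algebraMap K (v.adicCompletion K)).toMonoidHom α * (x v)⁻¹ = y ^ (ℓ ^ k) := by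
  classical
  rcases eq_or_ne S ∅ with rfl | hS
  · exact ⟨1, by simp⟩
  obtain ⟨v₀, hv₀⟩ := Finset.nonempty_iff_ne_empty.mpr hS
  set n : ℕ := ℓ ^ k with hn
  have hn0 : n ≠ 0 := pow_ne_zero k hℓ.pos.ne'
  haveI hCZ : ∀ v : HeightOneSpectrum (𝓞 K), CharZero (v.adicCompletion K) := fun v =>
    charZero_of_injective_algebraMap (algebraMap K (v.adicCompletion K)).injective
  have hncast : ∀ v : HeightOneSpectrum (𝓞 K), ((n : ℕ) : v.adicCompletion K) ≠ 0 := fun v =>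
    Nat.cast_ne_zero.mpr hn0
  set ε : HeightOneSpectrum (𝓞 K) → ℝ := fun v =>
    ‖((n : ℕ) : v.adicCompletion K)‖ ^ 2 * ‖(x v : v.adicCompletion K)‖ with hεdef
  have hxpos : ∀ v : HeightOneSpectrum (𝓞 K), (0:ℝ) < ‖(x v : v.adicCompletion K)‖ := fun v =>
    norm_pos_iff.mpr (Units.ne_zero _)
  have hε0 : ∀ v, 0 < ε v := fun v => by
    have h1 : (0:ℝ) < ‖((n : ℕ) : v.adicCompletion K)‖ := norm_pos_iff.mpr (hncast v)
    have h2 := hxpos v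
    positivity
  have hε_le : ∀ v, ε v ≤ ‖(x v : v.adicCompletion K)‖ := fun v => by
    have h1 := IsUltrametricDist.norm_natCast_le_one (v.adicCompletion K) n
    have h2 := norm_nonneg ((n : ℕ) : v.adicCompletion K)
    have h3 := hxpos v
    show ‖((n : ℕ) : v.adicCompletion K)‖ ^ 2 * ‖(x v : v.adicCompletion K)‖
      ≤ ‖(x v : v.adicCompletion K)‖
    have h4 : ‖((n : ℕ) : v.adicCompletion K)‖ ^ 2 ≤ 1 := by nlinarith
    nlinarith [mul_le_mul_of_nonneg_right h4 h3.le]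
  -- Step 1: approximate each `x v` by an element of `K`.
  have hβ : ∀ v : HeightOneSpectrum (𝓞 K), ∃ β : K,
      ‖algebraMap K (v.adicCompletion K) β - (x v : v.adicCompletion K)‖ < ε v := by
    intro v
    have hd : DenseRange ((↑) : K → v.adicCompletion K) :=
      v.denseRange_algebraMap K
    obtain ⟨β, hb⟩ := hd.exists_dist_lt (x v : v.adicCompletion K) (hε0 v)
    refine ⟨β, ?_⟩
    rw [show (algebraMap K (v.adicCompletion K)) β = (β : v.adicCompletion K) from rfl,
      ← dist_eq_norm, dist_comm]
    exact hb
  choose β hβ' using hβ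
  -- Step 2: common denominator.
  obtain ⟨b, hb⟩ := IsLocalization.exist_integer_multiples (nonZeroDivisors (𝓞 K)) S β
  have hb' : ∀ v ∈ S, ∃ r : 𝓞 K, algebraMap (𝓞 K) K r = (b : 𝓞 K) • β v := fun v hv => hb v hv
  choose a ha using hb'
  have hbne : (b : 𝓞 K) ≠ 0 := nonZeroDivisors.coe_ne_zero b
  set dK : K := algebraMap (𝓞 K) K (b : 𝓞 K) with hdKdef
  have hdKne : dK ≠ 0 := by
    rw [hdKdef]
    exact (map_ne_zero_iff _ (IsFractionRing.injective (𝓞 K) K)).mpr hbne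
  have hdKvne : ∀ v : HeightOneSpectrum (𝓞 K),
      algebraMap K (v.adicCompletion K) dK ≠ 0 := fun v =>
    (map_ne_zero_iff _ (algebraMap K (v.adicCompletion K)).injective).mpr hdKne
  -- Step 3: choose exponents.
  have hM : ∀ v : HeightOneSpectrum (𝓞 K), ∃ M : ℕ,
      ((1:ℝ)/2) ^ M < ε v * ‖algebraMap K (v.adicCompletion K) dK‖ := by
    intro v
    apply exists_pow_lt_of_lt_one
    · have := norm_pos_iff.mpr (hdKvne v)
      have := hε0 v
      positivity
    · norm_num
  choose M hMlt using hM
  -- Step 4: CRT.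
  obtain ⟨A, hA⟩ := IsDedekindDomain.exists_forall_sub_mem_ideal (s := S)
    (fun v => v.asIdeal) (fun v => M v) (fun v _ => v.prime)
    (fun i _ j _ hij hEq => hij (HeightOneSpectrum.ext hEq))
    (fun i => a i.1 i.2)
  set α₀ : K := algebraMap (𝓞 K) K A / dK with hα₀def
  -- Step 5: the approximation estimate at every `v ∈ S`.
  have hmain : ∀ v ∈ S,
      ‖algebraMap K (v.adicCompletion K) α₀ - (x v : v.adicCompletion K)‖ < ε v := by
    intro v hv
    have hnum : ‖algebraMap K (v.adicCompletion K)
        (algebraMap (𝓞 K) K (A - a v hv))‖ ≤ ((1:ℝ)/2) ^ M v := by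
      apply adicCompletion_norm_le_of_valued_le
      rw [show (algebraMap K (v.adicCompletion K)) (algebraMap (𝓞 K) K (A - a v hv)) =
        ((algebraMap (𝓞 K) K (A - a v hv) : K) : v.adicCompletion K) from rfl]
      rw [valuedAdicCompletion_eq_valuation', valuation_of_algebraMap]
      exact (v.intValuation_le_pow_iff_dvd _ _).mpr (Ideal.dvd_span_singleton.mpr (hA v hv))
    have hβeq : β v = algebraMap (𝓞 K) K (a v hv) / dK := by
      rw [ha v hv, Algebra.smul_def, ← hdKdef, mul_div_cancel_left₀ _ hdKne]
    have hdiff : α₀ - β v = algebraMap (𝓞 K) K (A - a v hv) / dK := by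
      rw [hα₀def, hβeq, map_sub, sub_div]
    have h1 : ‖algebraMap K (v.adicCompletion K) α₀
        - algebraMap K (v.adicCompletion K) (β v)‖ < ε v := by
      rw [← map_sub, hdiff, map_div₀, norm_div]
      rw [div_lt_iff₀ (norm_pos_iff.mpr (hdKvne v))]
      calc ‖algebraMap K (v.adicCompletion K) (algebraMap (𝓞 K) K (A - a v hv))‖
          ≤ ((1:ℝ)/2) ^ M v := hnum
        _ < ε v * ‖algebraMap K (v.adicCompletion K) dK‖ := hMlt v
    calc ‖algebraMap K (v.adicCompletion K) α₀ - (x v : v.adicCompletion K)‖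
        = ‖(algebraMap K (v.adicCompletion K) α₀ - algebraMap K (v.adicCompletion K) (β v))
            + (algebraMap K (v.adicCompletion K) (β v) - (x v : v.adicCompletion K))‖ := by
          ring_nf
      _ ≤ max ‖algebraMap K (v.adicCompletion K) α₀ - algebraMap K (v.adicCompletion K) (β v)‖
            ‖algebraMap K (v.adicCompletion K) (β v) - (x v : v.adicCompletion K)‖ :=
          IsUltrametricDist.norm_add_le_max _ _
      _ < ε v := max_lt h1 (hβ' v)
  -- Step 6: `α₀` is nonzero.
  have hα₀ne : α₀ ≠ 0 := by
    intro h0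
    have := hmain v₀ hv₀
    rw [h0, map_zero, zero_sub, norm_neg] at this
    exact absurd (this.trans_le (hε_le v₀)) (lt_irrefl _)
  refine ⟨Units.mk0 α₀ hα₀ne, ?_⟩
  intro v hv
  -- Step 7: extract the `ℓ^k`-th root via the Hensel-type lemma.
  set u : v.adicCompletion K :=
    algebraMap K (v.adicCompletion K) α₀ * ((x v : v.adicCompletion K))⁻¹ with hudef
  have hu : ‖u - 1‖ < ‖((n : ℕ) : v.adicCompletion K)‖ ^ 2 := by
    have heq : u - 1 = (algebraMap K (v.adicCompletion K) α₀ - (x v : v.adicCompletion K))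
        * ((x v : v.adicCompletion K))⁻¹ := by
      rw [hudef]
      field_simp
    rw [heq, norm_mul, norm_inv]
    rw [mul_inv_lt_iff₀ (hxpos v)]
    calc ‖algebraMap K (v.adicCompletion K) α₀ - (x v : v.adicCompletion K)‖ < ε v := hmain v hv
      _ = ‖((n : ℕ) : v.adicCompletion K)‖ ^ 2 * ‖(x v : v.adicCompletion K)‖ := rfl
  obtain ⟨z, hz, -⟩ := exists_pow_eq_of_norm_sub_one_lt (hncast v) hu
  have hune : u ≠ 0 := by
    rw [hudef]
    exact mul_ne_zero ((map_ne_zero_iff _ (algebraMap K (v.adicCompletion K)).injective).mpr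
      hα₀ne) (inv_ne_zero (Units.ne_zero _))
  have hzne : z ≠ 0 := by
    intro h0
    rw [h0, zero_pow hn0] at hz
    exact hune hz.symm
  refine ⟨Units.mk0 z hzne, ?_⟩
  apply Units.ext
  rw [Units.val_mul, Units.val_pow_eq_pow_val]
  simp only [Units.coe_map, Units.val_mk0, RingHom.toMonoidHom_eq_coe, MonoidHom.coe_coe,
    Units.val_inv_eq_inv_val]
  rw [← hudef]
  exact hz.symm
end

section
/- Let L/K be a finite extension of number fields, let v be a finite place of K and w a place of L lying above v, let ℓ be a prime number and k a natural number. If α ∈ Kˣ is a local norm at w, i.e. there exists z ∈ L_wˣ with N_{L_w/K_v}(z) = ι_v(α), then there exists y ∈ Lˣ such that ι_v(α · N_{L/K}(y)⁻¹) is an ℓ^k-th power in K_vˣ. -/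
open IsDedekindDomain IsDedekindDomain.HeightOneSpectrum NumberField
open scoped NumberField

noncomputable section

open Polynomial Multiplicative Filter
open scoped WithZero

open Filter in
theorem newton_pow_root {F : Type*} [NormedField F] [CompleteSpace F]
    [IsUltrametricDist F] {q : ℕ} (hq2 : 2 ≤ q) {x : F}
    (hq0 : (q : F) ≠ 0) (hx : ‖x - 1‖ < ‖(q : F)‖ ^ 2) : ∃ b : F, b ^ q = x := by
  have hQ0 : (0:ℝ) < ‖(q:F)‖ := norm_pos_iff.mpr hq0
  set Q := ‖(q:F)‖ with hQdef
  have hQ1 : Q ≤ 1 := IsUltrametricDist.norm_natCast_le_one F q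
  set δ := ‖x - 1‖ with hδdef
  have hδ0 : (0:ℝ) ≤ δ := norm_nonneg _
  set ρ := δ / Q^2 with hρdef
  have hρ0 : (0:ℝ) ≤ ρ := div_nonneg hδ0 (by positivity)
  have hρ1 : ρ < 1 := (div_lt_one (by positivity)).mpr hx
  have hδQ : δ / Q < Q := by
    rw [div_lt_iff₀ hQ0]
    calc δ < Q^2 := hx
    _ = Q * Q := sq Q
  have hone : ∀ y : F, ‖y‖ < 1 → ‖1 + y‖ = 1 := by
    intro y hy
    refine le_antisymm ((IsUltrametricDist.norm_add_le_max _ _).trans (by simp [hy.le])) ?_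
    by_contra hcon
    push_neg at hcon
    have h1 : ‖(1 + y) - y‖ = 1 := by simp
    have h2 : ‖(1 + y) - y‖ ≤ max ‖1 + y‖ ‖y‖ := by
      rw [sub_eq_add_neg]
      exact (IsUltrametricDist.norm_add_le_max _ _).trans (by rw [norm_neg])
    rw [h1] at h2
    rcases max_cases ‖1 + y‖ ‖y‖ with ⟨he, _⟩ | ⟨he, _⟩ <;> rw [he] at h2 <;> linarith
  let t : ℕ → F := fun m => Nat.rec (1:F) (fun _ tm => tm - (tm ^ q - x) / ((q:F) * tm ^ (q-1))) m
  have ht0 : t 0 = 1 := rfl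
  have htsucc : ∀ m, t (m+1) = t m - (t m ^ q - x) / ((q:F) * t m ^ (q-1)) := fun m => rfl
  have key : ∀ m, ‖t m - 1‖ ≤ δ / Q ∧ ‖t m ^ q - x‖ ≤ δ * ρ ^ m := by
    intro m
    induction m with
    | zero =>
      constructor
      · simp only [ht0, sub_self, norm_zero]
        positivity
      · simp only [ht0, one_pow, pow_zero, mul_one]
        rw [norm_sub_rev]
    | succ m ih =>
      obtain ⟨ih1, ih2⟩ := ih
      have htm1 : ‖t m - 1‖ < 1 := lt_of_le_of_lt ih1 (lt_of_lt_of_le hδQ hQ1)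
      have htmnorm : ‖t m‖ = 1 := by
        have := hone (t m - 1) htm1
        rwa [add_sub_cancel] at this
      have hd : ‖(q:F) * t m ^ (q-1)‖ = Q := by
        rw [norm_mul, norm_pow, htmnorm, one_pow, mul_one]
      have hdne : (q:F) * t m ^ (q-1) ≠ 0 := by
        intro h0
        rw [h0, norm_zero] at hd
        exact hQ0.ne hd
      set h : F := -((t m ^ q - x) / ((q:F) * t m ^ (q-1))) with hh
      have hstep : t (m+1) = t m + h := by rw [htsucc, hh]; ring
      have hnorm_h : ‖h‖ = ‖t m ^ q - x‖ / Q := by rw [hh, norm_neg, norm_div, hd]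
      have hh_le : ‖h‖ ≤ δ * ρ ^ m / Q := by
        rw [hnorm_h]
        gcongr
      have hh_le' : ‖h‖ ≤ δ / Q := by
        refine hh_le.trans ?_
        gcongr
        calc δ * ρ ^ m ≤ δ * 1 := by
              exact mul_le_mul_of_nonneg_left (pow_le_one₀ hρ0 hρ1.le) hδ0
        _ = δ := mul_one δ
      have hh1 : ‖h‖ < 1 := lt_of_le_of_lt hh_le' (lt_of_lt_of_le hδQ hQ1)
      constructor
      · rw [hstep]
        have he : t m + h - 1 = (t m - 1) + h := by ring
        rw [he]
        exact (IsUltrametricDist.norm_add_le_max _ _).trans (max_le ih1 hh_le')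
      · rw [hstep]
        have hcancel : (q:F) * t m ^ (q-1) * h = -(t m ^ q - x) := by
          rw [hh, mul_neg, mul_div_cancel₀ _ hdne]
        have hexp : (t m + h) ^ q - x
            = ∑ k ∈ Finset.range (q-1), t m ^ k * h ^ (q - k) * (q.choose k : F) := by
          have hbin := add_pow (t m) h q
          have hr1 : q - 1 + 1 = q := by omega
          have hsplit : ∑ k ∈ Finset.range (q + 1), t m ^ k * h ^ (q - k) * (q.choose k : F)
              = (∑ k ∈ Finset.range (q-1), t m ^ k * h ^ (q - k) * (q.choose k : F))
                + t m ^ (q-1) * h ^ (q - (q-1)) * (q.choose (q-1) : F)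
                + t m ^ q * h ^ (q - q) * (q.choose q : F) := by
            rw [← hr1, Finset.sum_range_succ, Finset.sum_range_succ, hr1]
          have hc1 : q - (q - 1) = 1 := by omega
          have hc2 : (q.choose (q-1) : F) = (q : F) := by
            rw [← Nat.choose_symm (by omega : q - 1 ≤ q), hc1, Nat.choose_one_right]
          rw [hbin, hsplit, hc1, hc2, Nat.sub_self, Nat.choose_self, pow_zero, pow_one,
            Nat.cast_one, mul_one]
          have hre : t m ^ (q-1) * h * (q:F) = (q:F) * t m ^ (q-1) * h := by ring
          rw [hre, hcancel]
          ring
        rw [hexp]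
        have hS : ‖∑ k ∈ Finset.range (q-1), t m ^ k * h ^ (q - k) * (q.choose k : F)‖
            ≤ ‖h‖ ^ 2 := by
          refine IsUltrametricDist.norm_sum_le_of_forall_le_of_nonneg (by positivity) ?_
          intro k hk
          rw [Finset.mem_range] at hk
          have h2qk : 2 ≤ q - k := by omega
          rw [norm_mul, norm_mul, norm_pow, norm_pow, htmnorm, one_pow, one_mul]
          calc ‖h‖ ^ (q - k) * ‖(q.choose k : F)‖
              ≤ ‖h‖ ^ (q - k) * 1 := by
                exact mul_le_mul_of_nonneg_left
                  (IsUltrametricDist.norm_natCast_le_one F _) (by positivity)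
          _ = ‖h‖ ^ (q - k) := mul_one _
          _ ≤ ‖h‖ ^ 2 := pow_le_pow_of_le_one (norm_nonneg _) hh1.le h2qk
        refine hS.trans ?_
        have h1 : ‖h‖ ^ 2 ≤ (δ * ρ ^ m / Q) ^ 2 :=
          pow_le_pow_left₀ (norm_nonneg _) hh_le 2
        refine h1.trans ?_
        have hexp2 : (δ * ρ ^ m / Q) ^ 2 = δ * (ρ ^ (2*m + 1)) := by
          rw [hρdef]
          field_simp
          ring_nf
          simp [hQ0.ne']
        rw [hexp2]
        exact mul_le_mul_of_nonneg_left
          (pow_le_pow_of_le_one hρ0 hρ1.le (by omega)) hδ0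
  have hnorm1 : ∀ m, ‖t m‖ = 1 := by
    intro m
    have htm1 : ‖t m - 1‖ < 1 := lt_of_le_of_lt (key m).1 (lt_of_lt_of_le hδQ hQ1)
    have := hone (t m - 1) htm1
    rwa [add_sub_cancel] at this
  have hcauchy : CauchySeq t := by
    refine cauchySeq_of_le_geometric ρ (δ/Q) hρ1 (fun n => ?_)
    rw [dist_eq_norm, htsucc]
    have hd : ‖(q:F) * t n ^ (q-1)‖ = Q := by
      rw [norm_mul, norm_pow, hnorm1, one_pow, mul_one]
    have he : t n - (t n - (t n ^ q - x) / ((q:F) * t n ^ (q-1)))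
        = (t n ^ q - x) / ((q:F) * t n ^ (q-1)) := by ring
    rw [he, norm_div, hd]
    calc ‖t n ^ q - x‖ / Q ≤ (δ * ρ ^ n) / Q := by gcongr; exact (key n).2
    _ = δ / Q * ρ ^ n := by ring
  obtain ⟨b, hb⟩ := cauchySeq_tendsto_of_complete hcauchy
  refine ⟨b, ?_⟩
  have h2 : Tendsto (fun m => t m ^ q - x) atTop (nhds (b ^ q - x)) :=
    (hb.pow q).sub_const x
  have h3 : Tendsto (fun m => t m ^ q - x) atTop (nhds 0) := by
    refine squeeze_zero_norm (fun m => (key m).2) ?_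
    have := (tendsto_pow_atTop_nhds_zero_of_lt_one hρ0 hρ1).const_mul δ
    simpa using this
  exact sub_eq_zero.mp (tendsto_nhds_unique h2 h3)

theorem leftMulMatrix_powerBasis_entry {R S : Type*} [Field R] [CommRing S] [Nontrivial S]
    [Algebra R S] (pb : PowerBasis R S) {f : R[X]} (hf : f.Monic)
    (hdeg : f.natDegree = pb.dim) (hf0 : aeval pb.gen f = 0) (c : R[X]) (i j : Fin pb.dim) :
    Algebra.leftMulMatrix pb.basis (aeval pb.gen c) i j
      = ((c * X ^ (j : ℕ)) %ₘ f).coeff i := by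
  have hfne : f ≠ 0 := hf.ne_zero
  set r := (c * X ^ (j : ℕ)) %ₘ f with hr
  have hdeglt : r.natDegree < pb.dim := by
    rcases eq_or_ne r 0 with h0 | h0
    · rw [h0, natDegree_zero, ← hdeg]
      rcases Nat.eq_zero_or_pos f.natDegree with hz | hz
      · exfalso
        have : f = 1 := hf.natDegree_eq_zero.mp hz
        rw [this] at hf0
        simp at hf0
      · exact hz
    · rw [← hdeg]
      exact natDegree_lt_natDegree h0 (degree_modByMonic_lt _ hf)
  have haeval : aeval pb.gen (c * X ^ (j : ℕ)) = aeval pb.gen r := by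
    conv_lhs => rw [← modByMonic_add_div (c * X ^ (j : ℕ)) f]
    rw [map_add, map_mul, hf0, zero_mul, add_zero]
  have hsum : aeval pb.gen r = ∑ i : Fin pb.dim, r.coeff i • pb.basis i := by
    rw [aeval_eq_sum_range' hdeglt, ← Fin.sum_univ_eq_sum_range]
    simp [PowerBasis.coe_basis]
  rw [Algebra.leftMulMatrix_eq_repr_mul]
  rw [show pb.basis j = pb.gen ^ (j : ℕ) from congrFun pb.coe_basis j]
  rw [show aeval pb.gen c * pb.gen ^ (j : ℕ) = aeval pb.gen (c * X ^ (j : ℕ)) by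
    rw [map_mul, aeval_X_pow]]
  rw [haeval, hsum, Module.Basis.repr_sum_self]

theorem norm_prod_algebra {R S T ι₁ ι₂ : Type*} [CommRing R] [CommRing S] [CommRing T]
    [Algebra R S] [Algebra R T] [Fintype ι₁] [Fintype ι₂] [DecidableEq ι₁] [DecidableEq ι₂]
    (b₁ : Module.Basis ι₁ R S) (b₂ : Module.Basis ι₂ R T) (x : S) (y : T) :
    Algebra.norm R ((x, y) : S × T) = Algebra.norm R x * Algebra.norm R y := by
  classical
  rw [Algebra.norm_eq_matrix_det (b₁.prod b₂), Algebra.norm_eq_matrix_det b₁,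
    Algebra.norm_eq_matrix_det b₂]
  have hblock : Algebra.leftMulMatrix (b₁.prod b₂) (x, y)
      = Matrix.fromBlocks (Algebra.leftMulMatrix b₁ x) 0 0 (Algebra.leftMulMatrix b₂ y) := by
    ext i j
    rcases i with i | i <;> rcases j with j | j <;>
      simp [Algebra.leftMulMatrix_eq_repr_mul, Matrix.fromBlocks,
        Module.Basis.prod_repr_inl, Module.Basis.prod_repr_inr, Module.Basis.prod_apply_inl_fst,
        Module.Basis.prod_apply_inr_fst, Module.Basis.prod_apply_inl_snd, Module.Basis.prod_apply_inr_snd,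
        Prod.mul_def]
  rw [hblock, Matrix.det_fromBlocks_zero₂₁]

/-- A rank-one structure on the valuation of an adic completion. -/
def adicCompletionRankOne {R : Type*} [CommRing R] [IsDedekindDomain R] (K : Type*) [Field K]
    [Algebra R K] [IsFractionRing R K] (v : HeightOneSpectrum R) :
    Valuation.RankOne (Valued.v : Valuation (v.adicCompletion K) ℤᵐ⁰) :=
  Valuation.IsRankOneDiscrete.rankOne _ (by norm_num : (1 : NNReal) < 2)

set_option maxHeartbeats 4000000 in
/-- **Approximation of a local norm by global norms, to any ℓ-power level.**
Let `L/K` be a finite extension of number fields, `v` a finite place of `K` and `w` a place of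
`L` lying above `v` (i.e. `w ∩ 𝓞 K = v`).  The completion `L_w` is regarded as a `K_v`-algebra
via the (unique) continuous ring homomorphism `φ : K_v →+* L_w` compatible with the inclusions
`K → K_v` and `K → L → L_w`; the local norm `N_{L_w/K_v}` is `Algebra.norm` for this structure.
If `α ∈ Kˣ` is a local norm at `w`, i.e. there is `z ∈ L_wˣ` with `N_{L_w/K_v}(z) = ι_v(α)`,
then for every prime `ℓ` and every `k : ℕ` there is `y ∈ Lˣ` such that
`ι_v(α · N_{L/K}(y)⁻¹)` is an `ℓ^k`-th power in `K_vˣ`. -/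
theorem local_norm_approx_by_global_norms
    (K L : Type*) [Field K] [NumberField K] [Field L] [NumberField L]
    [Algebra K L] [FiniteDimensional K L]
    (v : HeightOneSpectrum (𝓞 K)) (w : HeightOneSpectrum (𝓞 L))
    (hw : w.asIdeal.comap (algebraMap (𝓞 K) (𝓞 L)) = v.asIdeal)
    (ℓ : ℕ) (hℓ : ℓ.Prime) (k : ℕ)
    (φ : v.adicCompletion K →+* w.adicCompletion L)
    (hφcont : Continuous φ)
    (hφcompat : ∀ x : K,
      φ (algebraMap K (v.adicCompletion K) x) =
        algebraMap L (w.adicCompletion L) (algebraMap K L x))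
    (hfin : @FiniteDimensional (v.adicCompletion K) (w.adicCompletion L) _ _
      (@Algebra.toModule _ _ _ _ φ.toAlgebra))
    (α : Kˣ)
    (hnorm : ∃ z : (w.adicCompletion L)ˣ,
      @Algebra.norm (v.adicCompletion K) (w.adicCompletion L) _ _ φ.toAlgebra
        (z : w.adicCompletion L) = algebraMap K (v.adicCompletion K) (α : K)) :
    ∃ y : Lˣ, ∃ u : (v.adicCompletion K)ˣ,
      Units.map (algebraMap K (v.adicCompletion K)).toMonoidHom
          (α * (Units.map (Algebra.norm K : L →* K) y)⁻¹) = u ^ (ℓ ^ k) := by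
  classical
  obtain ⟨z, hz⟩ := hnorm
  letI : Algebra (v.adicCompletion K) (w.adicCompletion L) := φ.toAlgebra
  haveI hfin' : FiniteDimensional (v.adicCompletion K) (w.adicCompletion L) := hfin
  rcases Nat.eq_zero_or_pos k with rfl | hk
  · exact ⟨1, Units.map (algebraMap K (v.adicCompletion K)).toMonoidHom
      (α * (Units.map (Algebra.norm K : L →* K) 1)⁻¹), by rw [pow_zero, pow_one]⟩
  have hq2 : 2 ≤ ℓ ^ k := by
    have : 1 < ℓ ^ k := Nat.one_lt_pow hk.ne' hℓ.one_lt
    omega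
  -- normed field structures
  letI rk1 : Valuation.RankOne (Valued.v : Valuation (v.adicCompletion K) ℤᵐ⁰) :=
    adicCompletionRankOne K v
  letI rk2 : Valuation.RankOne (Valued.v : Valuation (w.adicCompletion L) ℤᵐ⁰) :=
    adicCompletionRankOne L w
  letI nfK : NontriviallyNormedField (v.adicCompletion K) :=
    Valued.toNontriviallyNormedField _ ℤᵐ⁰
  letI nfL : NormedField (w.adicCompletion L) := Valued.toNormedField _ ℤᵐ⁰
  haveI hUK : IsUltrametricDist (v.adicCompletion K) :=
    IsUltrametricDist.isUltrametricDist_of_forall_norm_add_le_max_norm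
      (fun x y => by
        have h := Valued.isNonarchimedean_norm (v.adicCompletion K) ℤᵐ⁰ x y; simpa using h)
  haveI : ContinuousSMul (v.adicCompletion K) (w.adicCompletion L) := by
    refine ⟨?_⟩
    exact (hφcont.comp continuous_fst).mul continuous_snd
  -- basic data
  set ι := algebraMap K (v.adicCompletion K) with hι
  set ιL := algebraMap L (w.adicCompletion L) with hιL
  let pb : PowerBasis K L := Field.powerBasisOfFiniteOfSeparable K L
  set θ := pb.gen with hθ
  set f := minpoly K θ with hf
  set θw := ιL θ with hθw
  have hθint : IsIntegral K θ := Algebra.IsIntegral.isIntegral θ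
  have hfmonic : f.Monic := minpoly.monic hθint
  have hdimf : f.natDegree = pb.dim := pb.natDegree_minpoly
  set F := f.map ι with hF
  have hFmonic : F.Monic := hfmonic.map ι
  have hFne : F ≠ 0 := hFmonic.ne_zero
  have hcompat : ∀ p : K[X], aeval θw (p.map ι) = ιL (aeval θ p) := by
    intro p
    rw [aeval_def, eval₂_map, aeval_def]
    have hcomp : (algebraMap (v.adicCompletion K) (w.adicCompletion L)).comp ι
        = ιL.comp (algebraMap K L) := RingHom.ext hφcompat
    rw [hcomp, Polynomial.hom_eval₂]
  have hθwF : aeval θw F = 0 := by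
    rw [hF, hcompat f, hf, minpoly.aeval, map_zero]
  have hθwint : IsIntegral (v.adicCompletion K) θw := ⟨F, hFmonic, hθwF⟩
  set fw := minpoly (v.adicCompletion K) θw with hfw
  have hfwmonic : fw.Monic := minpoly.monic hθwint
  obtain ⟨g, hFfg⟩ : fw ∣ F := minpoly.dvd _ _ hθwF
  have hgmonic : g.Monic := hfwmonic.of_mul_monic_left (hFfg ▸ hFmonic)
  have hFsep : F.Separable := Polynomial.Separable.map (Algebra.IsSeparable.isSeparable K θ)
  have hcop : IsCoprime fw g := by
    have hsep : (fw * g).Separable := hFfg ▸ hFsep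
    exact hsep.isCoprime
  -- density and adjoin = ⊤
  have hdense : DenseRange ιL := by
    letI : UniformSpace L := w.adicValued.toUniformSpace
    exact denseRange_algebraMap L w
  have htop : Algebra.adjoin (v.adicCompletion K) ({θw} : Set (w.adicCompletion L)) = ⊤ := by
    have hsub : Set.range ιL ⊆
        (Algebra.adjoin (v.adicCompletion K) ({θw} : Set (w.adicCompletion L)) : Set _) := by
      rintro _ ⟨l, rfl⟩
      obtain ⟨p, hp⟩ := pb.exists_eq_aeval' l
      rw [hp, ← hcompat p]
      rw [SetLike.mem_coe, Algebra.adjoin_singleton_eq_range_aeval]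
      exact ⟨p.map ι, rfl⟩
    have hclosed : IsClosed ((Subalgebra.toSubmodule
        (Algebra.adjoin (v.adicCompletion K) ({θw} : Set (w.adicCompletion L)))
          : Submodule (v.adicCompletion K) (w.adicCompletion L)) : Set (w.adicCompletion L)) :=
      Submodule.closed_of_finiteDimensional _
    have huniv : (Algebra.adjoin (v.adicCompletion K) ({θw} : Set (w.adicCompletion L))
        : Set (w.adicCompletion L)) = Set.univ := by
      apply Set.eq_univ_of_univ_subset
      calc (Set.univ : Set (w.adicCompletion L)) = closure (Set.range ιL) :=
            hdense.closure_range.symm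
      _ ⊆ closure (Algebra.adjoin (v.adicCompletion K)
            ({θw} : Set (w.adicCompletion L)) : Set _) := closure_mono hsub
      _ = _ := hclosed.closure_eq
    exact Algebra.eq_top_iff.mpr (fun x => by
      have : x ∈ (Algebra.adjoin (v.adicCompletion K)
          ({θw} : Set (w.adicCompletion L)) : Set _) := huniv ▸ Set.mem_univ x
      exact this)
  have hzmem : (z : w.adicCompletion L)
      ∈ Algebra.adjoin (v.adicCompletion K) ({θw} : Set (w.adicCompletion L)) :=
    htop ▸ Algebra.mem_top
  rw [Algebra.adjoin_singleton_eq_range_aeval, AlgHom.mem_range] at hzmem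
  obtain ⟨Zp, hZp⟩ := hzmem
  -- the Kv-algebra A = Kv[X]/(F)
  haveI hAnontriv : Nontrivial (AdjoinRoot F) := by
    refine AdjoinRoot.nontrivial F ?_
    have h0 : 0 < f.natDegree := minpoly.natDegree_pos hθint
    have : F.natDegree ≠ 0 := by rw [hF, hfmonic.natDegree_map]; omega
    intro hcon
    exact this (Polynomial.natDegree_eq_zero_iff_degree_le_zero.mpr (le_of_eq hcon))
  let pbA : PowerBasis (v.adicCompletion K) (AdjoinRoot F) := AdjoinRoot.powerBasis hFne
  have hdimA : pbA.dim = F.natDegree := rfl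
  have hgenA : pbA.gen = AdjoinRoot.root F := rfl
  have hdimEq : pb.dim = pbA.dim := by
    rw [hdimA, hF, hfmonic.natDegree_map, hdimf]
  have haevalA : aeval pbA.gen F = 0 := by
    rw [hgenA, AdjoinRoot.aeval_eq, AdjoinRoot.mk_self]
  -- norm base change
  have hbase : ∀ c : K[X], ι (Algebra.norm K (aeval θ c))
      = Algebra.norm (v.adicCompletion K) (AdjoinRoot.mk F (c.map ι)) := by
    intro c
    rw [Algebra.norm_eq_matrix_det pb.basis, Algebra.norm_eq_matrix_det pbA.basis,
      show AdjoinRoot.mk F (c.map ι) = aeval pbA.gen (c.map ι) by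
        rw [hgenA, AdjoinRoot.aeval_eq]]
    rw [RingHom.map_det, RingHom.mapMatrix_apply]
    have hM : (Algebra.leftMulMatrix pb.basis (aeval θ c)).map ι
        = (Algebra.leftMulMatrix pbA.basis (aeval pbA.gen (c.map ι))).submatrix
            (finCongr hdimEq) (finCongr hdimEq) := by
      ext i j
      rw [Matrix.map_apply,
        leftMulMatrix_powerBasis_entry pb hfmonic hdimf (minpoly.aeval K θ) c i j,
        Matrix.submatrix_apply,
        leftMulMatrix_powerBasis_entry pbA hFmonic hdimA.symm haevalA (c.map ι) _ _,
        ← Polynomial.coeff_map, Polynomial.map_modByMonic _ hfmonic, Polynomial.map_mul,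
        Polynomial.map_pow, Polynomial.map_X]
      simp
      rfl
    rw [hM, Matrix.det_submatrix_equiv_self]
  -- CRT
  obtain ⟨Aq, Bq, hbez⟩ := hcop
  set c₀ : Polynomial (v.adicCompletion K) := Zp * (Bq * g) + Aq * fw with hc₀
  have hspan : Ideal.span ({F} : Set (Polynomial (v.adicCompletion K)))
      = Ideal.span {fw} * Ideal.span {g} := by
    rw [Ideal.span_singleton_mul_span_singleton, hFfg]
  have hcopI : IsCoprime (Ideal.span ({fw} : Set (Polynomial (v.adicCompletion K))))
      (Ideal.span ({g} : Set (Polynomial (v.adicCompletion K)))) :=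
    (Ideal.isCoprime_span_singleton_iff _ _).mpr ⟨Aq, Bq, hbez⟩
  let crt : AdjoinRoot F ≃+* (AdjoinRoot fw) × (AdjoinRoot g) :=
    (Ideal.quotEquivOfEq hspan).trans (Ideal.quotientMulEquivQuotientProd _ _ hcopI)
  have hcrtmk : ∀ p : Polynomial (v.adicCompletion K),
      crt (AdjoinRoot.mk F p) = (AdjoinRoot.mk fw p, AdjoinRoot.mk g p) := by
    intro p
    show (Ideal.quotientMulEquivQuotientProd _ _ hcopI)
        ((Ideal.quotEquivOfEq hspan) (Ideal.Quotient.mk _ p)) = _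
    rw [Ideal.quotEquivOfEq_mk]
    ext
    · rw [Ideal.quotientMulEquivQuotientProd_fst]
      rfl
    · rw [Ideal.quotientMulEquivQuotientProd_snd]
      rfl
  let crtA : AdjoinRoot F ≃ₐ[v.adicCompletion K] (AdjoinRoot fw) × (AdjoinRoot g) :=
    { crt with
      commutes' := by
        intro x
        show crt (algebraMap _ (AdjoinRoot F) x) = _
        rw [AdjoinRoot.algebraMap_eq]
        show crt (AdjoinRoot.mk F (C x)) = _
        rw [hcrtmk]
        rfl }
  -- identify AdjoinRoot fw with Lw
  let e2 : AdjoinRoot fw ≃ₐ[v.adicCompletion K] (w.adicCompletion L) :=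
    (minpoly.equivAdjoin hθwint).trans
      ((Subalgebra.equivOfEq _ _ htop).trans Subalgebra.topEquiv)
  have hroot : e2 (AdjoinRoot.root fw) = θw := by
    have h1 : (AdjoinRoot.Minpoly.toAdjoin (v.adicCompletion K) θw) (AdjoinRoot.root fw)
        = ⟨θw, Algebra.self_mem_adjoin_singleton _ _⟩ := by
      rw [AdjoinRoot.Minpoly.coe_toAdjoin, AdjoinRoot.liftAlgHom_root]
    have h2 : (minpoly.equivAdjoin hθwint) (AdjoinRoot.root fw)
        = ⟨θw, Algebra.self_mem_adjoin_singleton _ _⟩ := h1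
    show (((Subalgebra.equivOfEq _ _ htop).trans Subalgebra.topEquiv)
      ((minpoly.equivAdjoin hθwint) (AdjoinRoot.root fw)) : w.adicCompletion L) = θw
    rw [h2]
    rfl
  have he2 : ∀ p, e2 (AdjoinRoot.mk fw p) = aeval θw p := by
    intro p
    rw [← AdjoinRoot.aeval_eq,
      show e2 (aeval (AdjoinRoot.root fw) p) = aeval (e2 (AdjoinRoot.root fw)) p from
        (aeval_algHom_apply e2 (AdjoinRoot.root fw) p).symm,
      hroot]
  -- norm of mk c₀
  have hfst : AdjoinRoot.mk fw c₀ = AdjoinRoot.mk fw Zp := by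
    have h2 : AdjoinRoot.mk fw (Bq * g) = 1 := by
      have hbg : Bq * g = 1 - Aq * fw := by linear_combination hbez
      rw [hbg, map_sub, map_one, map_mul, AdjoinRoot.mk_self, mul_zero, sub_zero]
    rw [hc₀, map_add, map_mul, h2, mul_one, map_mul, AdjoinRoot.mk_self, mul_zero, add_zero]
  have hsnd : AdjoinRoot.mk g c₀ = 1 := by
    have h2 : AdjoinRoot.mk g (Aq * fw) = 1 := by
      have hbg : Aq * fw = 1 - Bq * g := by linear_combination hbez
      rw [hbg, map_sub, map_one, map_mul, AdjoinRoot.mk_self, mul_zero, sub_zero]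
    have h3 : AdjoinRoot.mk g (Zp * (Bq * g)) = 0 := by
      rw [map_mul, map_mul, AdjoinRoot.mk_self, mul_zero, mul_zero]
    rw [hc₀, map_add, h3, zero_add, h2]
  have hnormc₀ : Algebra.norm (v.adicCompletion K) (AdjoinRoot.mk F c₀) = ι (α : K) := by
    have hstep1 : Algebra.norm (v.adicCompletion K) (AdjoinRoot.mk F c₀)
        = Algebra.norm (v.adicCompletion K) (crtA (AdjoinRoot.mk F c₀)) :=
      (Algebra.norm_eq_of_algEquiv crtA _).symm
    have hcrtc₀ : crtA (AdjoinRoot.mk F c₀) = (AdjoinRoot.mk fw Zp, (1 : AdjoinRoot g)) := by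
      show crt (AdjoinRoot.mk F c₀) = _
      rw [hcrtmk, hfst, hsnd]
    rw [hstep1, hcrtc₀,
      norm_prod_algebra (AdjoinRoot.powerBasis' hfwmonic).basis
        (AdjoinRoot.powerBasis' hgmonic).basis _ _]
    rw [← Algebra.norm_eq_of_algEquiv e2, he2, hZp, map_one, mul_one, hz]
  -- the continuous norm form
  let lc : (Fin pbA.dim → (v.adicCompletion K))
      →ₗ[v.adicCompletion K] Matrix (Fin pbA.dim) (Fin pbA.dim) (v.adicCompletion K) :=
    (Algebra.leftMulMatrix pbA.basis).toLinearMap.comp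
      (pbA.basis.equivFun.symm : _ →ₗ[v.adicCompletion K] AdjoinRoot F)
  have hΦcont : Continuous (fun c : Fin pbA.dim → (v.adicCompletion K) => (lc c).det) :=
    (LinearMap.continuous_on_pi lc).matrix_det
  have hΦval : ∀ p : Polynomial (v.adicCompletion K), p.natDegree < pbA.dim →
      (lc (fun i => p.coeff i)).det = Algebra.norm (v.adicCompletion K) (AdjoinRoot.mk F p) := by
    intro p hp
    rw [Algebra.norm_eq_matrix_det pbA.basis]
    congr 1
    have hmk : pbA.basis.equivFun.symm (fun i : Fin pbA.dim => p.coeff i)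
        = AdjoinRoot.mk F p := by
      rw [Module.Basis.equivFun_symm_apply, ← AdjoinRoot.aeval_eq, aeval_eq_sum_range' hp,
        ← Fin.sum_univ_eq_sum_range]
      refine Finset.sum_congr rfl (fun i _ => ?_)
      rw [congrFun pbA.coe_basis i, hgenA]
    show Algebra.leftMulMatrix pbA.basis (pbA.basis.equivFun.symm (fun i => p.coeff i)) = _
    rw [hmk]
  -- the target point
  have hr₀deg : (c₀ %ₘ F).natDegree < pbA.dim := by
    rw [hdimA]
    have hdegF : 0 < F.natDegree := by
      rw [hF, hfmonic.natDegree_map]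
      exact minpoly.natDegree_pos hθint
    rcases eq_or_ne (c₀ %ₘ F) 0 with h0 | h0
    · rw [h0, natDegree_zero]; exact hdegF
    · exact natDegree_lt_natDegree h0 (degree_modByMonic_lt _ hFmonic)
  have hmkr₀ : AdjoinRoot.mk F (c₀ %ₘ F) = AdjoinRoot.mk F c₀ := by
    rw [AdjoinRoot.mk_eq_mk]
    refine ⟨-(c₀ /ₘ F), ?_⟩
    have := modByMonic_add_div c₀ F
    linear_combination this
  set γ₀ : Fin pbA.dim → (v.adicCompletion K) := fun i => (c₀ %ₘ F).coeff i with hγ₀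
  have hγ₀val : (lc γ₀).det = ι (α : K) := by
    rw [hγ₀, hΦval _ hr₀deg, hmkr₀, hnormc₀]
  -- approximation by a global element
  have hαne : ι (α : K) ≠ 0 := fun h =>
    Units.ne_zero α ((algebraMap K (v.adicCompletion K)).injective (by rw [h, map_zero]))
  have hqK : ((ℓ ^ k : ℕ) : v.adicCompletion K) ≠ 0 := by
    have h1 : ((ℓ ^ k : ℕ) : K) ≠ 0 := Nat.cast_ne_zero.mpr (pow_ne_zero k hℓ.ne_zero)
    rw [show (((ℓ ^ k : ℕ) : ℕ) : v.adicCompletion K) = ι ((ℓ ^ k : ℕ) : K) from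
      (map_natCast ι _).symm]
    exact fun h => h1 (ι.injective (by rw [h, map_zero]))
  set δ := ‖ι (α : K)‖ * ‖((ℓ ^ k : ℕ) : v.adicCompletion K)‖ ^ 2 with hδ
  have hδpos : 0 < δ := mul_pos (norm_pos_iff.mpr hαne) (pow_pos (norm_pos_iff.mpr hqK) 2)
  have hdenseK : DenseRange ι := by
    letI : UniformSpace K := v.adicValued.toUniformSpace
    exact denseRange_algebraMap K v
  set U := {c : Fin pbA.dim → (v.adicCompletion K) | ‖(lc c).det - ι (α : K)‖ < δ} with hU
  have hUopen : IsOpen U := by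
    have hcont : Continuous fun c : Fin pbA.dim → (v.adicCompletion K) =>
        ‖(lc c).det - ι (α : K)‖ := (hΦcont.sub continuous_const).norm
    exact isOpen_lt hcont continuous_const
  have hγ₀U : γ₀ ∈ U := by
    simp only [hU, Set.mem_setOf_eq, hγ₀val, sub_self, norm_zero]
    exact hδpos
  obtain ⟨I, O, hO, hsub⟩ := isOpen_pi_iff.mp hUopen γ₀ hγ₀U
  choose cK hcK using fun (i : Fin pbA.dim) (hi : i ∈ I) =>
    hdenseK.exists_mem_open (hO i hi).1 ⟨γ₀ i, (hO i hi).2⟩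
  let cvec : Fin pbA.dim → K := fun i => if hi : i ∈ I then cK i hi else 0
  have hcin : (fun i => ι (cvec i)) ∈ U := by
    apply hsub
    intro i hi
    show ι (cvec i) ∈ O i
    have hcv : cvec i = cK i hi := dif_pos hi
    rw [hcv]
    exact hcK i hi
  -- the global element
  set cp : K[X] := ∑ i : Fin pbA.dim, Polynomial.C (cvec i) * Polynomial.X ^ (i : ℕ) with hcp
  have hdim0 : 0 < pbA.dim := by
    rw [hdimA, hF, hfmonic.natDegree_map]
    exact minpoly.natDegree_pos hθint
  have hcpdeg : (cp.map ι).natDegree < pbA.dim := by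
    have h1 : cp.natDegree ≤ pbA.dim - 1 := by
      refine natDegree_sum_le_of_forall_le _ _ (fun i _ => ?_)
      refine (natDegree_C_mul_X_pow_le _ _).trans ?_
      omega
    have h2 : (cp.map ι).natDegree ≤ cp.natDegree := natDegree_map_le
    omega
  have hcpcoeff : (fun i : Fin pbA.dim => (cp.map ι).coeff i) = fun i => ι (cvec i) := by
    funext j
    rw [coeff_map]
    congr 1
    rw [hcp, finset_sum_coeff]
    calc ∑ i : Fin pbA.dim, (C (cvec i) * X ^ (i : ℕ)).coeff (j : ℕ)
        = ∑ i : Fin pbA.dim, if i = j then cvec i else 0 := by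
          refine Finset.sum_congr rfl (fun i _ => ?_)
          rw [coeff_C_mul_X_pow]
          by_cases h : i = j
          · subst h; simp
          · rw [if_neg (fun hc => h (Fin.val_injective hc).symm), if_neg h]
    _ = cvec j := by rw [Finset.sum_ite_eq' Finset.univ j cvec]; simp
  have hNyval : ι (Algebra.norm K (aeval θ cp)) = (lc (fun i => ι (cvec i))).det := by
    rw [hbase cp, ← hΦval (cp.map ι) hcpdeg, hcpcoeff]
  have hclose : ‖ι (Algebra.norm K (aeval θ cp)) - ι (α : K)‖ < δ := by
    rw [hNyval]
    exact hcin
  -- Newton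
  set Nval := Algebra.norm K (aeval θ cp) with hNvaldef
  have hq1 : ‖((ℓ ^ k : ℕ) : v.adicCompletion K)‖ ≤ 1 :=
    IsUltrametricDist.norm_natCast_le_one _ _
  have hNne : ι Nval ≠ 0 := by
    intro h0
    rw [h0, zero_sub, norm_neg, hδ] at hclose
    have hα : (0:ℝ) < ‖ι (α : K)‖ := norm_pos_iff.mpr hαne
    have h2 : ‖ι (α : K)‖ * ‖((ℓ ^ k : ℕ) : v.adicCompletion K)‖ ^ 2 ≤ ‖ι (α : K)‖ * 1 := by
      gcongr
      exact pow_le_one₀ (norm_nonneg _) hq1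
    rw [mul_one] at h2
    linarith
  set x : v.adicCompletion K := (ι (α : K))⁻¹ * ι Nval with hx
  have hxne : x ≠ 0 := mul_ne_zero (inv_ne_zero hαne) hNne
  have hx1 : ‖x - 1‖ < ‖((ℓ ^ k : ℕ) : v.adicCompletion K)‖ ^ 2 := by
    have hsubeq : x - 1 = (ι (α : K))⁻¹ * (ι Nval - ι (α : K)) := by
      rw [hx, mul_sub, inv_mul_cancel₀ hαne]
    rw [hsubeq, norm_mul, norm_inv]
    rw [inv_mul_lt_iff₀ (norm_pos_iff.mpr hαne)]
    calc ‖ι Nval - ι (α : K)‖ < δ := hclose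
    _ = ‖ι (α : K)‖ * ‖((ℓ ^ k : ℕ) : v.adicCompletion K)‖ ^ 2 := hδ
  obtain ⟨b, hb⟩ := newton_pow_root hq2 hqK hx1
  have hbne : b ≠ 0 := by
    intro h0
    rw [h0] at hb
    exact hxne (hb.symm.trans (zero_pow (by positivity : ℓ ^ k ≠ 0)))
  have hNvalne : Nval ≠ 0 := fun h => hNne (by rw [h, map_zero])
  have hy0 : aeval θ cp ≠ 0 := Algebra.norm_ne_zero_iff.mp hNvalne
  refine ⟨Units.mk0 (aeval θ cp) hy0, (Units.mk0 b hbne)⁻¹, ?_⟩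
  apply Units.ext
  rw [Units.val_pow_eq_pow_val]
  have h1 : ((Units.map (algebraMap K (v.adicCompletion K)).toMonoidHom
      (α * (Units.map (Algebra.norm K : L →* K) (Units.mk0 (aeval θ cp) hy0))⁻¹))
        : v.adicCompletion K) = ι ((α : K) * (Algebra.norm K (aeval θ cp))⁻¹) := by
    rw [Units.coe_map, Units.val_mul, Units.val_inv_eq_inv_val, Units.coe_map, Units.val_mk0]
    rfl
  rw [h1, map_mul, map_inv₀]
  rw [Units.val_inv_eq_inv_val, Units.val_mk0, inv_pow, hb, hx, mul_inv, inv_inv]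
end
end

section
/- Let L/K be a finite extension of number fields, let 𝔪 be a nonzero ideal of 𝒪_K, and let 𝔘 be a nonzero fractional ideal of L whose relative norm N_{L/K}(𝔘) is coprime to 𝔪, i.e. has valuation 0 at every prime of K dividing 𝔪. Then there exists a nonzero fractional ideal 𝔅 of L which is coprime to 𝔪 — meaning that v_w(𝔅) = 0 for every finite place w of L lying above a prime of K dividing 𝔪 — and which satisfies N_{L/K}(𝔅) = N_{L/K}(𝔘). -/
open IsDedekindDomain IsDedekindDomain.HeightOneSpectrum NumberField
open scoped NumberField nonZeroDivisors

variable (K L : Type*) [Field K] [NumberField K] [Field L] [NumberField L]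
  [Algebra K L] [FiniteDimensional K L]

/-- The exponent of the finite place `v` of `K` in the relative norm `N_{L/K}(I)` of a
nonzero fractional ideal `I` of `L`: it equals `∑_{w ∣ v} f(w/v) · v_w(I)`, the sum being
over the places `w` of `L` above `v` (the terms for `w` not above `v` vanish, since
`Ideal.inertiaDeg` is zero there by convention). -/
noncomputable def relNormCount (I : FractionalIdeal (𝓞 L)⁰ L)
    (v : HeightOneSpectrum (𝓞 K)) : ℤ :=
  ∑ᶠ w : HeightOneSpectrum (𝓞 L),
    (Ideal.inertiaDeg' v.asIdeal w.asIdeal : ℤ) *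
      FractionalIdeal.count L w I

/-- **Lemma 3.1.1 (divisor form): a norm coprime to a modulus is the norm of a divisor
coprime to that modulus.**  Let `L/K` be a finite extension of number fields, `𝔪` a nonzero
ideal of `𝓞 K`, and `𝔘` a nonzero fractional ideal of `L` whose relative norm is coprime to
`𝔪`, i.e. has exponent `0` at every finite place `v` of `K` dividing `𝔪`.  Then there is a
nonzero fractional ideal `𝔅` of `L`, coprime to `𝔪` (meaning `v_w(𝔅) = 0` for every finite
place `w` of `L` lying above a prime of `K` dividing `𝔪`), with
`N_{L/K}(𝔅) = N_{L/K}(𝔘)` (i.e. the two norms have the same exponent at every finite place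
of `K`). -/
theorem exists_coprime_divisor_with_same_norm
    (𝔪 : Ideal (𝓞 K)) (h𝔪 : 𝔪 ≠ 0)
    (𝔘 : FractionalIdeal (𝓞 L)⁰ L) (h𝔘 : 𝔘 ≠ 0)
    (hcop : ∀ v : HeightOneSpectrum (𝓞 K), v.asIdeal ∣ 𝔪 → relNormCount K L 𝔘 v = 0) :
    ∃ 𝔅 : FractionalIdeal (𝓞 L)⁰ L, 𝔅 ≠ 0 ∧
      (∀ (w : HeightOneSpectrum (𝓞 L)) (v : HeightOneSpectrum (𝓞 K)),
        w.asIdeal.comap (algebraMap (𝓞 K) (𝓞 L)) = v.asIdeal → v.asIdeal ∣ 𝔪 →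
          FractionalIdeal.count L w 𝔅 = 0) ∧
      ∀ v : HeightOneSpectrum (𝓞 K), relNormCount K L 𝔅 v = relNormCount K L 𝔘 v := by
  classical
  -- the exponents of `𝔅`: kill the exponents of `𝔘` at the bad places.
  set e : HeightOneSpectrum (𝓞 L) → ℤ := fun w =>
    if 𝔪 ≤ w.asIdeal.comap (algebraMap (𝓞 K) (𝓞 L)) then 0
    else FractionalIdeal.count L w 𝔘 with he
  have hfin : ∀ᶠ w : HeightOneSpectrum (𝓞 L) in Filter.cofinite, e w = 0 := by
    filter_upwards [FractionalIdeal.finite_factors 𝔘] with w hw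
    simp [he, hw]
  set exps : HeightOneSpectrum (𝓞 L) →₀ ℤ :=
    Finsupp.mk hfin.toFinset e (fun _ ↦ hfin.mem_toFinset) with hexps
  refine ⟨exps.prod (HeightOneSpectrum.asIdeal · ^ ·), ?_, ?_, ?_⟩
  · refine Finset.prod_ne_zero_iff.mpr fun w _ ↦ ?_
    exact zpow_ne_zero _ (FractionalIdeal.coeIdeal_ne_zero.mpr w.ne_bot)
  · intro w v hwv hv𝔪
    rw [FractionalIdeal.count_finsuppProd]
    have : 𝔪 ≤ w.asIdeal.comap (algebraMap (𝓞 K) (𝓞 L)) := by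
      rw [hwv]; exact Ideal.le_of_dvd hv𝔪
    simp [hexps, he, this]
  · intro v
    by_cases hv : v.asIdeal ∣ 𝔪
    · rw [hcop v hv, relNormCount]
      refine finsum_eq_zero_of_forall_eq_zero fun w ↦ ?_
      rw [FractionalIdeal.count_finsuppProd]
      by_cases hc : w.asIdeal.comap (algebraMap (𝓞 K) (𝓞 L)) = v.asIdeal
      · have : 𝔪 ≤ w.asIdeal.comap (algebraMap (𝓞 K) (𝓞 L)) := by
          rw [hc]; exact Ideal.le_of_dvd hv
        simp [hexps, he, this]
      · rw [Ideal.inertiaDeg', dif_neg hc]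
        simp
    · rw [relNormCount, relNormCount]
      refine finsum_congr fun w ↦ ?_
      rw [FractionalIdeal.count_finsuppProd]
      by_cases hc : w.asIdeal.comap (algebraMap (𝓞 K) (𝓞 L)) = v.asIdeal
      · have : ¬ 𝔪 ≤ w.asIdeal.comap (algebraMap (𝓞 K) (𝓞 L)) := by
          rw [hc]; exact fun h ↦ hv (Ideal.dvd_iff_le.mpr h)
        simp [hexps, he, this]
      · rw [Ideal.inertiaDeg', dif_neg hc]
        simp
end
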